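/- Fix τ₁ ≥ 0 and σ_s > 0. Then the function u(σ̃) = (σ_s²/σ̃)·H(τ₁/σ̃) is strictly decreasing in σ̃ on (0, ∞); i.e., the expected quality of an applicant selected by the agent at threshold τ₁ decays monotonically in the noise level of the signal s̃. -/

import Mathlib

open MeasureTheory ProbabilityTheory Real

/-- Standard normal density. -/
noncomputable def stdPdf (x : ℝ) : ℝ := (Real.sqrt (2 * Real.pi))⁻¹ * Real.exp (-(x ^ 2) / 2)

/-- Standard normal CDF. -/
noncomputable def stdCdf (x : ℝ) : ℝ := ∫ u in Set.Iic x, stdPdf u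

/-- Standard normal complementary CDF. -/
noncomputable def stdCcdf (x : ℝ) : ℝ := 1 - stdCdf x

/-- Standard normal hazard rate. -/
noncomputable def hazard (x : ℝ) : ℝ := stdPdf x / stdCcdf x

lemma stdPdf_eq (x : ℝ) : stdPdf x = (Real.sqrt (2 * Real.pi))⁻¹ * Real.exp (-(1/2) * x ^ 2) := by
  rw [stdPdf]; ring_nf

lemma stdPdf_pos (x : ℝ) : 0 < stdPdf x := by
  apply mul_pos (inv_pos.2 (Real.sqrt_pos.2 (by positivity))) (Real.exp_pos _)

lemma continuous_stdPdf : Continuous stdPdf := by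
  unfold stdPdf; fun_prop

lemma integrable_stdPdf : Integrable stdPdf := by
  have : Integrable (fun x : ℝ => (Real.sqrt (2 * Real.pi))⁻¹ * Real.exp (-(1/2) * x ^ 2)) :=
    (integrable_exp_neg_mul_sq (by norm_num)).const_mul _
  exact this.congr (by filter_upwards with x using (stdPdf_eq x).symm)

lemma integral_stdPdf : ∫ x, stdPdf x = 1 := by
  have h : ∫ x, stdPdf x = (Real.sqrt (2 * Real.pi))⁻¹ * ∫ x : ℝ, Real.exp (-(1/2) * x ^ 2) := by
    rw [← integral_const_mul]
    exact integral_congr_ae (by filter_upwards with x using stdPdf_eq x)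
  rw [h, integral_gaussian]
  have : Real.sqrt (π / (1/2)) = Real.sqrt (2 * π) := by norm_num [mul_comm]
  rw [this, inv_mul_cancel₀ (ne_of_gt (Real.sqrt_pos.2 (by positivity)))]

lemma stdCcdf_eq (x : ℝ) : stdCcdf x = ∫ t in Set.Ioi x, stdPdf t := by
  have := intervalIntegral.integral_Iic_add_Ioi (b := x) integrable_stdPdf.integrableOn integrable_stdPdf.integrableOn
  rw [stdCcdf, stdCdf, ← integral_stdPdf, ← this]
  ring

lemma stdCcdf_pos (x : ℝ) : 0 < stdCcdf x := by
  rw [stdCcdf_eq]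
  refine (setIntegral_pos_iff_support_of_nonneg_ae ?_ integrable_stdPdf.integrableOn).2 ?_
  · filter_upwards with t using (stdPdf_pos t).le
  · have : Function.support stdPdf = Set.univ := by
      ext t; simp [Function.mem_support, (stdPdf_pos t).ne']
    rw [this, Set.univ_inter]
    simp [Real.volume_Ioi]

lemma hazard_pos (x : ℝ) : 0 < hazard x :=
  div_pos (stdPdf_pos x) (stdCcdf_pos x)

lemma hasDerivAt_stdPdf (x : ℝ) : HasDerivAt stdPdf (-x * stdPdf x) x := by
  have h : HasDerivAt (fun y : ℝ => -(y ^ 2) / 2) (-x) x := by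
    have := ((hasDerivAt_pow 2 x).neg).div_const 2
    simpa using this.congr_deriv (by ring)
  have h2 := (h.exp.const_mul (Real.sqrt (2 * Real.pi))⁻¹)
  have h3 : HasDerivAt stdPdf ((Real.sqrt (2 * Real.pi))⁻¹ * (Real.exp (-(x ^ 2) / 2) * (-x))) x := by
    exact h2
  convert h3 using 1
  simp only [stdPdf]; ring

lemma hasDerivAt_stdCdf (x : ℝ) : HasDerivAt stdCdf (stdPdf x) x := by
  have key : ∀ y : ℝ, stdCdf y = stdCdf 0 + ∫ t in (0:ℝ)..y, stdPdf t := by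
    intro y
    rw [← intervalIntegral.integral_Iic_sub_Iic integrable_stdPdf.integrableOn integrable_stdPdf.integrableOn]
    rw [stdCdf, stdCdf]; ring
  have h : HasDerivAt (fun y => stdCdf 0 + ∫ t in (0:ℝ)..y, stdPdf t) (stdPdf x) x := by
    refine HasDerivAt.const_add _ ?_
    exact intervalIntegral.integral_hasDerivAt_right
      (continuous_stdPdf.intervalIntegrable _ _)
      (continuous_stdPdf.stronglyMeasurableAtFilter _ _)
      continuous_stdPdf.continuousAt
  exact h.congr_of_eventuallyEq (by filter_upwards with y using key y)

lemma hasDerivAt_stdCcdf (x : ℝ) : HasDerivAt stdCcdf (-stdPdf x) x := by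
  exact (hasDerivAt_stdCdf x).const_sub 1

lemma integral_mul_stdPdf_Ioi (x : ℝ) : ∫ t in Set.Ioi x, t * stdPdf t = stdPdf x := by
  have hderiv : ∀ t ∈ Set.Ici x, HasDerivAt (fun y => -stdPdf y) (t * stdPdf t) t := by
    intro t _
    exact (hasDerivAt_stdPdf t).neg.congr_deriv (by ring)
  have hint : IntegrableOn (fun t => t * stdPdf t) (Set.Ioi x) := by
    have : Integrable (fun t : ℝ => (Real.sqrt (2 * Real.pi))⁻¹ *
        (t * Real.exp (-(1/2) * t ^ 2))) :=
      ((integrable_mul_exp_neg_mul_sq (by norm_num)).const_mul _)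
    refine (this.congr ?_).integrableOn
    filter_upwards with t
    rw [stdPdf_eq]; ring
  have htend : Filter.Tendsto (fun y => -stdPdf y) Filter.atTop (nhds 0) := by
    have hsq : Filter.Tendsto (fun y : ℝ => y ^ 2 / 2) Filter.atTop Filter.atTop :=
      (Filter.tendsto_pow_atTop two_ne_zero).atTop_div_const (by norm_num)
    have : Filter.Tendsto (fun y : ℝ => Real.exp (-(y ^ 2) / 2)) Filter.atTop (nhds 0) := by
      have h := Real.tendsto_exp_neg_atTop_nhds_zero.comp hsq
      refine h.congr fun y => ?_
      simp [Function.comp, neg_div]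
    have h2 := (this.const_mul (Real.sqrt (2 * Real.pi))⁻¹).neg
    rw [mul_zero, neg_zero] at h2
    exact h2
  have := integral_Ioi_of_hasDerivAt_of_tendsto' hderiv hint htend
  simpa using this

lemma mills (x : ℝ) (hx : 0 < x) : x * stdCcdf x ≤ stdPdf x := by
  rw [stdCcdf_eq, ← integral_mul_stdPdf_Ioi x, ← integral_const_mul]
  apply setIntegral_mono_on
  · exact (integrable_stdPdf.integrableOn).const_mul _
  · have : Integrable (fun t : ℝ => (Real.sqrt (2 * Real.pi))⁻¹ *
        (t * Real.exp (-(1/2) * t ^ 2))) :=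
      ((integrable_mul_exp_neg_mul_sq (by norm_num)).const_mul _)
    refine (this.congr ?_).integrableOn
    filter_upwards with t
    rw [stdPdf_eq]; ring
  · exact measurableSet_Ioi
  · intro t ht
    exact mul_le_mul_of_nonneg_right (le_of_lt ht) (stdPdf_pos t).le

lemma hazard_ge (x : ℝ) (hx : 0 < x) : x ≤ hazard x :=
  (le_div_iff₀ (stdCcdf_pos x)).2 (mills x hx)

lemma hasDerivAt_hazard (x : ℝ) :
    HasDerivAt hazard (hazard x * (hazard x - x)) x := by
  have h := (hasDerivAt_stdPdf x).div (hasDerivAt_stdCcdf x) (stdCcdf_pos x).ne'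
  refine (h.congr_deriv ?_)
  have hne := (stdCcdf_pos x).ne'
  rw [hazard]
  field_simp
  ring

lemma strictMonoOn_g : StrictMonoOn (fun x => x * hazard x) (Set.Ioi (0:ℝ)) := by
  have hderiv : ∀ x : ℝ, HasDerivAt (fun x => x * hazard x)
      (hazard x + x * (hazard x * (hazard x - x))) x := fun x =>
    (hasDerivAt_id x).mul (hasDerivAt_hazard x) |>.congr_deriv (by simp only [id_eq]; ring)
  apply StrictMonoOn.mono (s := Set.Ici (0:ℝ)) ?_ Set.Ioi_subset_Ici_self
  apply strictMonoOn_of_deriv_pos (convex_Ici 0)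
  · exact fun x _ => ((hderiv x).continuousAt).continuousWithinAt
  · intro x hx
    rw [interior_Ici] at hx
    rw [(hderiv x).deriv]
    have h1 := hazard_pos x
    have h2 := hazard_ge x hx
    have hx' : (0:ℝ) < x := hx
    nlinarith [mul_nonneg (mul_nonneg hx'.le h1.le) (sub_nonneg.2 h2)]

/-- The expected quality `(σ_s²/σ̃)·H(τ₁/σ̃)` of an applicant selected by the agent at
threshold `τ₁ ≥ 0` is strictly decreasing in the noise level `σ̃` of the observed signal. -/
theorem expected_quality_strictAnti_in_noise (τ₁ σs : ℝ) (hτ : 0 ≤ τ₁) (hσs : 0 < σs) :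
    StrictAntiOn (fun σtl : ℝ => σs ^ 2 / σtl * hazard (τ₁ / σtl))
      (Set.Ioi (0 : ℝ)) := by
  intro a ha b hb hab
  simp only [Set.mem_Ioi] at ha hb
  rcases eq_or_lt_of_le hτ with h0 | hτpos
  · -- τ₁ = 0
    simp only [← h0, zero_div]
    have h := hazard_pos 0
    have : σs ^ 2 / b < σs ^ 2 / a := by
      apply div_lt_div_of_pos_left (by positivity) ha hab
    exact mul_lt_mul_of_pos_right this h
  · -- τ₁ > 0
    have key : ∀ σ : ℝ, 0 < σ →
        σs ^ 2 / σ * hazard (τ₁ / σ) = σs ^ 2 / τ₁ * ((τ₁ / σ) * hazard (τ₁ / σ)) := by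
      intro σ hσ
      field_simp
    simp only [key a ha, key b hb]
    apply mul_lt_mul_of_pos_left _ (by positivity)
    apply strictMonoOn_g
    · exact Set.mem_Ioi.2 (by positivity)
    · exact Set.mem_Ioi.2 (by positivity)
    · exact div_lt_div_of_pos_left hτpos ha hab
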